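/- arXiv:1708.08796 — 2 statements merged into one kernel-verified Lean document; each statement's English description precedes it below -/
import Mathlib

section
/- Let α ∈ (0,1] and c ∈ ℝ, and define K(t) = c·t^(α−1)/Γ(α) and R(t) = Σ_{n=0}^∞ (−1)^n c^(n+1) t^((n+1)α − 1)/Γ((n+1)α) for t > 0 (i.e., R(t) = c·t^(α−1)·E_{α,α}(−c·t^α), where E_{α,β}(z) = Σ_{n=0}^∞ z^n/Γ(αn+β) is the Mittag–Leffler function). Then the series defining R converges absolutely for every t > 0, R ∈ L¹_loc(ℝ₊, ℝ), and R is the resolvent of the second kind of K: (K*R)(t) = (R*K)(t) = K(t) − R(t) for every t > 0. -/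
open MeasureTheory Set
open Filter

lemma gamma_interp {α y : ℝ} (hα : α ∈ Set.Ioc (0:ℝ) 1) (hy : 1 ≤ y) :
    Real.Gamma y * (y + α - 1) ^ α ≤ Real.Gamma (y + α) := by
  obtain ⟨hα0, hα1⟩ := hα
  have hy0 : (0:ℝ) < y := lt_of_lt_of_le one_pos hy
  have hb : (0:ℝ) < y + α - 1 := by linarith
  have hΓy : 0 < Real.Gamma y := Real.Gamma_pos_of_pos hy0
  have hΓ2 : 0 < Real.Gamma (y + α) := Real.Gamma_pos_of_pos (by linarith)
  have hΓ1 : 0 < Real.Gamma (y + α - 1) := Real.Gamma_pos_of_pos hb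
  have hconv := Real.convexOn_log_Gamma.2 (Set.mem_Ioi.mpr hb)
    (Set.mem_Ioi.mpr (show (0:ℝ) < y + α by linarith)) hα0.le (by linarith : (0:ℝ) ≤ 1 - α)
    (by ring)
  have harg : α • (y + α - 1) + (1 - α) • (y + α) = y := by simp [smul_eq_mul]; ring
  rw [harg] at hconv
  -- Gamma (y+α) = (y+α-1) * Gamma (y+α-1)
  have hrec : Real.Gamma (y + α) = (y + α - 1) * Real.Gamma (y + α - 1) := by
    have := Real.Gamma_add_one (ne_of_gt hb)
    rw [show y + α - 1 + 1 = y + α by ring] at this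
    exact this
  have hlog1 : Real.log (Real.Gamma (y + α - 1))
      = Real.log (Real.Gamma (y + α)) - Real.log (y + α - 1) := by
    rw [hrec, Real.log_mul (ne_of_gt hb) (ne_of_gt hΓ1)]; ring
  simp only [Function.comp_apply, smul_eq_mul] at hconv
  rw [hlog1] at hconv
  have key : Real.log (Real.Gamma y) + α * Real.log (y + α - 1)
      ≤ Real.log (Real.Gamma (y + α)) := by nlinarith [hconv]
  have hlhs : Real.log (Real.Gamma y * (y + α - 1) ^ α)
      = Real.log (Real.Gamma y) + α * Real.log (y + α - 1) := by
    rw [Real.log_mul (ne_of_gt hΓy) (ne_of_gt (Real.rpow_pos_of_pos hb α)),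
      Real.log_rpow hb]
  refine (Real.log_le_log_iff ?_ hΓ2).mp ?_
  · positivity
  · rw [hlhs]; exact key

lemma ml_summable {α β x C : ℝ} (hα : α ∈ Set.Ioc (0:ℝ) 1) (hβ : 0 < β) (hx : 0 ≤ x) :
    Summable (fun n : ℕ => C * x ^ n / Real.Gamma ((n : ℝ) * α + β)) := by
  obtain ⟨hα0, hα1⟩ := hα
  set M : ℝ := max 1 ((2 * x + 1) ^ α⁻¹ + 1 - α) with hM
  refine summable_of_ratio_norm_eventually_le (r := 1/2) (by norm_num) ?_
  rw [eventually_atTop]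
  refine ⟨⌈M / α⌉₊, fun n hn => ?_⟩
  set y : ℝ := (n : ℝ) * α + β with hy
  have hyM : M ≤ y := by
    have h1 : M / α ≤ (⌈M / α⌉₊ : ℝ) := Nat.le_ceil _
    have h2 : (⌈M / α⌉₊ : ℝ) ≤ (n : ℝ) := Nat.cast_le.mpr hn
    have : M / α * α ≤ (n:ℝ) * α := by
      apply mul_le_mul_of_nonneg_right (h1.trans h2) hα0.le
    rw [div_mul_cancel₀ _ (ne_of_gt hα0)] at this
    linarith
  have hy1 : 1 ≤ y := le_trans (le_max_left _ _) hyM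
  have hy0 : 0 < y := lt_of_lt_of_le one_pos hy1
  have hb : 0 < y + α - 1 := by linarith
  have hΓy : 0 < Real.Gamma y := Real.Gamma_pos_of_pos hy0
  have hΓ2 : 0 < Real.Gamma (y + α) := Real.Gamma_pos_of_pos (by linarith)
  -- (y + α - 1)^α ≥ 2x+1
  have hbase : (2 * x + 1) ^ α⁻¹ ≤ y + α - 1 := by
    have := le_trans (le_max_right 1 _) hyM
    linarith
  have hpow : 2 * x + 1 ≤ (y + α - 1) ^ α := by
    have h1 : ((2 * x + 1) ^ α⁻¹) ^ α ≤ (y + α - 1) ^ α :=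
      Real.rpow_le_rpow (Real.rpow_nonneg (by linarith) _) hbase hα0.le
    rwa [← Real.rpow_mul (by linarith : (0:ℝ) ≤ 2*x+1), inv_mul_cancel₀ (ne_of_gt hα0),
      Real.rpow_one] at h1
  have hkey : Real.Gamma y * (2 * x + 1) ≤ Real.Gamma (y + α) := by
    calc Real.Gamma y * (2 * x + 1) ≤ Real.Gamma y * (y + α - 1) ^ α := by
          exact mul_le_mul_of_nonneg_left hpow hΓy.le
      _ ≤ Real.Gamma (y + α) := gamma_interp ⟨hα0, hα1⟩ hy1
  have hyn : ((n : ℝ) + 1) * α + β = y + α := by rw [hy]; ring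
  have h2x : (0:ℝ) < 2 * x + 1 := by linarith
  have hd : 0 < Real.Gamma y * (2 * x + 1) := by positivity
  rw [Real.norm_eq_abs, Real.norm_eq_abs, abs_div, abs_div]
  push_cast
  rw [hyn, abs_of_pos hΓ2, abs_of_pos hΓy]
  have hxp : |C * x ^ (n + 1)| = |C * x ^ n| * x := by
    rw [pow_succ, ← mul_assoc, abs_mul, abs_of_nonneg hx]
  rw [hxp]
  calc |C * x ^ n| * x / Real.Gamma (y + α)
      ≤ |C * x ^ n| * x / (Real.Gamma y * (2 * x + 1)) := by
        apply div_le_div_of_nonneg_left (by positivity) hd hkey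
    _ = (|C * x ^ n| / Real.Gamma y) * (x / (2 * x + 1)) := by rw [div_mul_div_comm]
    _ ≤ (|C * x ^ n| / Real.Gamma y) * (1 / 2) := by
        refine mul_le_mul_of_nonneg_left ?_ (by positivity)
        rw [div_le_div_iff₀ h2x two_pos]; linarith
    _ = 1 / 2 * (|C * x ^ n| / Real.Gamma y) := by rw [div_mul_div_comm]; ring

-- complex integrand equals coercion of real integrand on (0,1]-type sets
lemma cpow_prod_ofReal {u v x y : ℝ} (hx : 0 ≤ x) (hy : 0 ≤ y) :
    (x:ℂ) ^ ((u:ℂ) - 1) * (y:ℂ) ^ ((v:ℂ) - 1)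
      = ((x ^ (u-1) * y ^ (v-1) : ℝ) : ℂ) := by
  rw [Complex.ofReal_mul, Complex.ofReal_cpow hx, Complex.ofReal_cpow hy]
  push_cast
  ring_nf

lemma beta_integrable01 {u v : ℝ} (hu : 0 < u) (hv : 0 < v) :
    IntegrableOn (fun x : ℝ => x ^ (u-1) * (1-x) ^ (v-1)) (Ioc (0:ℝ) 1) := by
  have hC := (Complex.betaIntegral_convergent (u := (u:ℂ)) (v := (v:ℂ))
    (by simpa using hu) (by simpa using hv))
  have h1 : IntegrableOn (fun x : ℝ => (x:ℂ) ^ ((u:ℂ) - 1) * (1 - (x:ℂ)) ^ ((v:ℂ) - 1))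
      (Ioc (0:ℝ) 1) := (intervalIntegrable_iff_integrableOn_Ioc_of_le zero_le_one).mp hC
  have h2 : IntegrableOn (fun x : ℝ => ((x:ℂ) ^ ((u:ℂ) - 1) * (1 - (x:ℂ)) ^ ((v:ℂ) - 1)).re)
      (Ioc (0:ℝ) 1) := h1.re
  refine h2.congr_fun (fun x hx => ?_) measurableSet_Ioc
  have : (1 : ℂ) - (x:ℂ) = ((1 - x : ℝ) : ℂ) := by push_cast; ring
  dsimp only; rw [this, cpow_prod_ofReal hx.1.le (by linarith [hx.2] : (0:ℝ) ≤ 1 - x), Complex.ofReal_re]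

lemma conv_integrable {t u v : ℝ} (ht : 0 < t) (hu : 0 < u) (hv : 0 < v) :
    IntegrableOn (fun s : ℝ => s ^ (u-1) * (t-s) ^ (v-1)) (Ioc (0:ℝ) t) := by
  have h0 := beta_integrable01 hu hv
  have h1 : IntervalIntegrable (fun x : ℝ => x ^ (u-1) * (1-x) ^ (v-1)) volume 0 1 := by
    rw [intervalIntegrable_iff_integrableOn_Ioc_of_le zero_le_one]; exact h0
  have h2 := (h1.comp_mul_left (c := t⁻¹)).const_mul (t ^ (u + v - 2))
  rw [zero_div, one_div, inv_inv] at h2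
  have h3 : IntegrableOn
      (fun s : ℝ => t ^ (u+v-2) * ((t⁻¹ * s) ^ (u-1) * (1 - t⁻¹ * s) ^ (v-1)))
      (Ioc (0:ℝ) t) := (intervalIntegrable_iff_integrableOn_Ioc_of_le ht.le).mp h2
  refine h3.congr_fun (fun s hs => ?_) measurableSet_Ioc
  have hs0 : 0 < s := hs.1
  have hst : s ≤ t := hs.2
  have e1 : s ^ (u-1) = t ^ (u-1) * (t⁻¹ * s) ^ (u-1) := by
    rw [← Real.mul_rpow ht.le (by positivity), ← mul_assoc, mul_inv_cancel₀ ht.ne', one_mul]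
  have e2 : (t - s) ^ (v-1) = t ^ (v-1) * (1 - t⁻¹ * s) ^ (v-1) := by
    have h4 : t⁻¹ * s ≤ 1 := by
      rw [mul_comm, ← div_eq_mul_inv]; exact (div_le_one ht).mpr hst
    rw [← Real.mul_rpow ht.le (by linarith : (0:ℝ) ≤ 1 - t⁻¹ * s)]
    congr 1
    field_simp
  rw [e1, e2]
  rw [show t ^ (u-1) * (t⁻¹ * s) ^ (u-1) * (t ^ (v-1) * (1 - t⁻¹ * s) ^ (v-1))
    = (t ^ (u-1) * t ^ (v-1)) * ((t⁻¹ * s) ^ (u-1) * (1 - t⁻¹ * s) ^ (v-1)) by ring,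
    ← Real.rpow_add ht, show u - 1 + (v - 1) = u + v - 2 by ring]

lemma beta_value {t u v : ℝ} (ht : 0 < t) (hu : 0 < u) (hv : 0 < v) :
    ∫ s in Ioc (0:ℝ) t, s ^ (u-1) * (t-s) ^ (v-1)
      = Real.Gamma u * Real.Gamma v / Real.Gamma (u+v) * t ^ (u+v-1) := by
  have hscaled := Complex.betaIntegral_scaled (u:ℂ) (v:ℂ) ht
  have hβ : Complex.betaIntegral (u:ℂ) (v:ℂ)
      = ((Real.Gamma u * Real.Gamma v / Real.Gamma (u+v) : ℝ) : ℂ) := by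
    have hG := Complex.Gamma_mul_Gamma_eq_betaIntegral (s := (u:ℂ)) (t := (v:ℂ))
      (by simpa using hu) (by simpa using hv)
    have hΓ : Complex.Gamma ((u:ℂ) + (v:ℂ)) = ((Real.Gamma (u+v) : ℝ) : ℂ) := by
      rw [← Complex.ofReal_add, Complex.Gamma_ofReal]
    have hne : ((Real.Gamma (u+v) : ℝ) : ℂ) ≠ 0 := by
      simpa using (Real.Gamma_pos_of_pos (by linarith)).ne'
    rw [hΓ] at hG
    rw [Complex.ofReal_div, Complex.ofReal_mul, ← Complex.Gamma_ofReal u, ← Complex.Gamma_ofReal v,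
      eq_div_iff hne, hG]
    ring
  -- turn complex interval integral into real one
  have hL : (∫ x : ℝ in (0:ℝ)..t, (x:ℂ) ^ ((u:ℂ) - 1) * ((t:ℂ) - (x:ℂ)) ^ ((v:ℂ) - 1))
      = ((∫ s in Ioc (0:ℝ) t, s ^ (u-1) * (t-s) ^ (v-1) : ℝ) : ℂ) := by
    rw [intervalIntegral.integral_of_le ht.le]
    calc (∫ x : ℝ in Ioc (0:ℝ) t, (x:ℂ) ^ ((u:ℂ) - 1) * ((t:ℂ) - (x:ℂ)) ^ ((v:ℂ) - 1))
        = ∫ x : ℝ in Ioc (0:ℝ) t, ((x ^ (u-1) * (t-x) ^ (v-1) : ℝ) : ℂ) := by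
          refine setIntegral_congr_fun measurableSet_Ioc (fun x hx => ?_)
          have h5 : (t:ℂ) - (x:ℂ) = ((t - x : ℝ) : ℂ) := by push_cast; ring
          rw [h5, cpow_prod_ofReal hx.1.le (by linarith [hx.2] : (0:ℝ) ≤ t - x)]
      _ = ((∫ s in Ioc (0:ℝ) t, s ^ (u-1) * (t-s) ^ (v-1) : ℝ) : ℂ) := integral_ofReal
  rw [hL, hβ] at hscaled
  have hR : ((t:ℂ)) ^ ((u:ℂ) + (v:ℂ) - 1) = ((t ^ (u+v-1) : ℝ) : ℂ) := by
    rw [Complex.ofReal_cpow ht.le]; push_cast; ring_nf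
  rw [hR, ← Complex.ofReal_mul] at hscaled
  have := Complex.ofReal_inj.mp hscaled
  rw [this]; ring

lemma integrable_tsum_aux {μ : Measure ℝ} {f : ℕ → ℝ → ℝ}
    (hf : ∀ n, Integrable (f n) μ)
    (hsum : Summable fun n => ∫ x, ‖f n x‖ ∂μ)
    (hpt : ∀ᵐ x ∂μ, Summable fun n => ‖f n x‖) :
    Integrable (fun x => ∑' n, f n x) μ := by
  constructor
  · refine aestronglyMeasurable_of_tendsto_ae atTop
      (f := fun k : ℕ => fun x => ∑ n ∈ Finset.range k, f n x)
      (fun k => Finset.aestronglyMeasurable_fun_sum _ (fun n _ => (hf n).1)) ?_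
    filter_upwards [hpt] with x hx
    exact (hx.of_norm.hasSum.tendsto_sum_nat)
  · rw [hasFiniteIntegral_iff_norm]
    have step1 : ∫⁻ x, ENNReal.ofReal ‖∑' n, f n x‖ ∂μ
        ≤ ∫⁻ x, ∑' n, ENNReal.ofReal ‖f n x‖ ∂μ := by
      refine lintegral_mono_ae ?_
      filter_upwards [hpt] with x hx
      calc ENNReal.ofReal ‖∑' n, f n x‖
          ≤ ENNReal.ofReal (∑' n, ‖f n x‖) :=
            ENNReal.ofReal_le_ofReal (norm_tsum_le_tsum_norm hx)
        _ = ∑' n, ENNReal.ofReal ‖f n x‖ :=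
            ENNReal.ofReal_tsum_of_nonneg (fun n => norm_nonneg _) hx
    have step2 : ∫⁻ x, ∑' n, ENNReal.ofReal ‖f n x‖ ∂μ
        = ∑' n, ∫⁻ x, ENNReal.ofReal ‖f n x‖ ∂μ :=
      lintegral_tsum (fun n => ((hf n).1.norm.aemeasurable.ennreal_ofReal))
    have step3 : ∀ n, ∫⁻ x, ENNReal.ofReal ‖f n x‖ ∂μ = ENNReal.ofReal (∫ x, ‖f n x‖ ∂μ) :=
      fun n => (ofReal_integral_eq_lintegral_ofReal (hf n).norm
        (Eventually.of_forall fun x => norm_nonneg _)).symm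
    have step4 : ∑' n, ENNReal.ofReal (∫ x, ‖f n x‖ ∂μ)
        = ENNReal.ofReal (∑' n, ∫ x, ‖f n x‖ ∂μ) :=
      (ENNReal.ofReal_tsum_of_nonneg (fun n => integral_nonneg fun x => norm_nonneg _) hsum).symm
    calc ∫⁻ x, ENNReal.ofReal ‖∑' n, f n x‖ ∂μ
        ≤ ∑' n, ∫⁻ x, ENNReal.ofReal ‖f n x‖ ∂μ := step1.trans_eq step2
      _ = ENNReal.ofReal (∑' n, ∫ x, ‖f n x‖ ∂μ) := by simp_rw [step3]; exact step4
      _ < ⊤ := ENNReal.ofReal_lt_top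

/-- combined facts about the scaled beta convolution integrand -/
lemma conv_piece {t : ℝ} (ht : 0 < t) {u v : ℝ} (hu : 0 < u) (hv : 0 < v) (b : ℝ) :
    Integrable (fun s : ℝ => b * (s ^ (u-1) * (t-s) ^ (v-1))) (volume.restrict (Ioc 0 t)) ∧
    (∫ s in Ioc (0:ℝ) t, b * (s ^ (u-1) * (t-s) ^ (v-1)))
      = b * (Real.Gamma u * Real.Gamma v / Real.Gamma (u+v) * t ^ (u+v-1)) ∧
    (∫ s in Ioc (0:ℝ) t, ‖b * (s ^ (u-1) * (t-s) ^ (v-1))‖)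
      = |b| * (Real.Gamma u * Real.Gamma v / Real.Gamma (u+v) * t ^ (u+v-1)) := by
  have hint := conv_integrable ht hu hv
  refine ⟨hint.const_mul b, ?_, ?_⟩
  · rw [integral_const_mul, beta_value ht hu hv]
  · have : ∀ s ∈ Ioc (0:ℝ) t, ‖b * (s ^ (u-1) * (t-s) ^ (v-1))‖
        = |b| * (s ^ (u-1) * (t-s) ^ (v-1)) := by
      intro s hs
      rw [Real.norm_eq_abs, abs_mul]
      congr 1
      rw [abs_of_nonneg]
      exact mul_nonneg (Real.rpow_nonneg hs.1.le _) (Real.rpow_nonneg (by linarith [hs.2]) _)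
    rw [setIntegral_congr_fun measurableSet_Ioc this, integral_const_mul, beta_value ht hu hv]

/-- The Mittag--Leffler-type kernel
`R(t) = Σ_{n≥0} (-1)^n c^(n+1) t^((n+1)α - 1) / Γ((n+1)α) = c t^(α-1) E_{α,α}(-c t^α)`
is the resolvent of the second kind of the fractional kernel `K(t) = c t^(α-1)/Γ(α)`
for `α ∈ (0,1]` and `c ∈ ℝ`: the series converges absolutely for every `t > 0`,
`R ∈ L¹_loc(ℝ₊)`, and `K*R = R*K = K - R` on `(0,∞)`. -/
theorem fractional_resolvent_second_kind (α c : ℝ) (hα : α ∈ Set.Ioc (0:ℝ) 1) :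
    (∀ t : ℝ, 0 < t → Summable (fun n : ℕ =>
      |(-1) ^ n * c ^ (n + 1) * t ^ (((n : ℝ) + 1) * α - 1) / Real.Gamma (((n : ℝ) + 1) * α)|)) ∧
    (∀ T : ℝ, 0 < T → IntegrableOn (fun t : ℝ => ∑' n : ℕ,
      (-1) ^ n * c ^ (n + 1) * t ^ (((n : ℝ) + 1) * α - 1) / Real.Gamma (((n : ℝ) + 1) * α))
      (Set.Ioc 0 T)) ∧
    (∀ t : ℝ, 0 < t →
      (∫ s in (0:ℝ)..t, (c * (t - s) ^ (α - 1) / Real.Gamma α) *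
          (∑' n : ℕ, (-1) ^ n * c ^ (n + 1) * s ^ (((n : ℝ) + 1) * α - 1) /
            Real.Gamma (((n : ℝ) + 1) * α)))
        = c * t ^ (α - 1) / Real.Gamma α
          - (∑' n : ℕ, (-1) ^ n * c ^ (n + 1) * t ^ (((n : ℝ) + 1) * α - 1) /
              Real.Gamma (((n : ℝ) + 1) * α)) ∧
      (∫ s in (0:ℝ)..t, (∑' n : ℕ, (-1) ^ n * c ^ (n + 1) * (t - s) ^ (((n : ℝ) + 1) * α - 1) /
            Real.Gamma (((n : ℝ) + 1) * α)) * (c * s ^ (α - 1) / Real.Gamma α))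
        = c * t ^ (α - 1) / Real.Gamma α
          - (∑' n : ℕ, (-1) ^ n * c ^ (n + 1) * t ^ (((n : ℝ) + 1) * α - 1) /
              Real.Gamma (((n : ℝ) + 1) * α))) := by
  obtain ⟨hα0, hα1⟩ := hα
  have hγ : ∀ n : ℕ, (0:ℝ) < ((n : ℝ) + 1) * α := fun n => by positivity
  have hΓγ : ∀ n : ℕ, (0:ℝ) < Real.Gamma (((n : ℝ) + 1) * α) :=
    fun n => Real.Gamma_pos_of_pos (hγ n)
  have hΓα : (0:ℝ) < Real.Gamma α := Real.Gamma_pos_of_pos hα0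
  -- absolute value of the n-th term
  have habs : ∀ (n : ℕ) {t : ℝ}, 0 < t →
      |(-1) ^ n * c ^ (n + 1) * t ^ (((n : ℝ) + 1) * α - 1) / Real.Gamma (((n : ℝ) + 1) * α)|
        = (|c| * t ^ (α - 1)) * (|c| * t ^ α) ^ n / Real.Gamma ((n : ℝ) * α + α) := by
    intro n t ht
    have htp : (0:ℝ) < t ^ (((n : ℝ) + 1) * α - 1) := Real.rpow_pos_of_pos ht _
    have hx : (|c| * t ^ α) ^ n = |c| ^ n * t ^ ((n : ℝ) * α) := by
      rw [mul_pow, ← Real.rpow_natCast (t ^ α) n, ← Real.rpow_mul ht.le, mul_comm α (n : ℝ)]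
    have hexp : t ^ (((n : ℝ) + 1) * α - 1) = t ^ ((n : ℝ) * α) * t ^ (α - 1) := by
      rw [← Real.rpow_add ht]; congr 1; ring
    have harg : ((n : ℝ) + 1) * α = (n : ℝ) * α + α := by ring
    rw [abs_div, abs_of_pos (hΓγ n), abs_mul, abs_mul, abs_pow, abs_pow, abs_neg, abs_one,
      one_pow, one_mul, abs_of_pos htp, hx, hexp, harg, pow_succ]
    ring
  -- Part 1 : summability
  have part1 : ∀ t : ℝ, 0 < t → Summable (fun n : ℕ =>
      |(-1) ^ n * c ^ (n + 1) * t ^ (((n : ℝ) + 1) * α - 1) / Real.Gamma (((n : ℝ) + 1) * α)|) := by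
    intro t ht
    exact (ml_summable (C := |c| * t ^ (α - 1)) (x := |c| * t ^ α) ⟨hα0, hα1⟩ hα0
      (by positivity)).congr (fun n => (habs n ht).symm)
  have part1' : ∀ t : ℝ, 0 < t → Summable (fun n : ℕ =>
      (-1) ^ n * c ^ (n + 1) * t ^ (((n : ℝ) + 1) * α - 1) / Real.Gamma (((n : ℝ) + 1) * α)) :=
    fun t ht => (part1 t ht).of_abs
  refine ⟨part1, ?_, ?_⟩
  -- Part 2 : local integrability
  · intro T hT
    have hrint : ∀ γ : ℝ, 0 < γ → ∫ s in Ioc (0:ℝ) T, s ^ (γ - 1) = T ^ γ / γ := by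
      intro γ hγ'
      rw [← intervalIntegral.integral_of_le hT.le,
        integral_rpow (Or.inl (by linarith : (-1:ℝ) < γ - 1))]
      rw [show γ - 1 + 1 = γ by ring, Real.zero_rpow (ne_of_gt hγ')]
      ring
    have hint : ∀ n : ℕ, Integrable (fun t : ℝ =>
        (-1) ^ n * c ^ (n + 1) * t ^ (((n : ℝ) + 1) * α - 1) / Real.Gamma (((n : ℝ) + 1) * α))
        (volume.restrict (Ioc 0 T)) := by
      intro n
      have h1 : IntervalIntegrable
          (fun t : ℝ => ((-1) ^ n * c ^ (n + 1) / Real.Gamma (((n : ℝ) + 1) * α)) *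
            t ^ (((n : ℝ) + 1) * α - 1)) volume 0 T :=
        (intervalIntegral.intervalIntegrable_rpow' (by linarith [hγ n])).const_mul _
      have h2 := (intervalIntegrable_iff_integrableOn_Ioc_of_le hT.le).mp h1
      exact h2.congr_fun (fun t _ => by ring) measurableSet_Ioc
    refine integrable_tsum_aux hint ?_ ?_
    · -- summability of norms of integrals
      have hval : ∀ n : ℕ, (∫ t in Ioc (0:ℝ) T,
          ‖(-1) ^ n * c ^ (n + 1) * t ^ (((n : ℝ) + 1) * α - 1) /
            Real.Gamma (((n : ℝ) + 1) * α)‖)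
          = (|c| * T ^ α) * (|c| * T ^ α) ^ n / Real.Gamma ((n : ℝ) * α + (α + 1)) := by
        intro n
        have e1 : ∀ t ∈ Ioc (0:ℝ) T,
            ‖(-1) ^ n * c ^ (n + 1) * t ^ (((n : ℝ) + 1) * α - 1) /
              Real.Gamma (((n : ℝ) + 1) * α)‖
            = (|c| ^ (n+1) / Real.Gamma (((n : ℝ) + 1) * α)) * t ^ (((n : ℝ) + 1) * α - 1) := by
          intro t htm
          have htp : (0:ℝ) < t ^ (((n : ℝ) + 1) * α - 1) := Real.rpow_pos_of_pos htm.1 _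
          rw [Real.norm_eq_abs, abs_div, abs_of_pos (hΓγ n), abs_mul, abs_mul, abs_pow, abs_pow,
            abs_neg, abs_one, one_pow, one_mul, abs_of_pos htp]
          ring
        rw [setIntegral_congr_fun measurableSet_Ioc e1, integral_const_mul, hrint _ (hγ n)]
        -- algebra
        have hΓ1 : Real.Gamma ((n : ℝ) * α + (α + 1)) =
            (((n : ℝ) + 1) * α) * Real.Gamma (((n : ℝ) + 1) * α) := by
          rw [show (n : ℝ) * α + (α + 1) = (((n : ℝ) + 1) * α) + 1 by ring,
            Real.Gamma_add_one (ne_of_gt (hγ n))]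
        have hTp : T ^ (((n : ℝ) + 1) * α) = (T ^ α) ^ (n + 1) := by
          rw [← Real.rpow_natCast (T ^ α) (n+1), ← Real.rpow_mul hT.le]
          push_cast; rw [mul_comm α]
        rw [hΓ1, hTp]
        rw [show (|c| * T ^ α) * (|c| * T ^ α) ^ n = (|c| * T ^ α) ^ (n+1) by rw [pow_succ]; ring,
          mul_pow]
        rw [div_mul_div_comm]
        ring
      refine (ml_summable (C := |c| * T ^ α) (x := |c| * T ^ α) ⟨hα0, hα1⟩
        (by linarith) (by positivity)).congr (fun n => (hval n).symm)
    · filter_upwards [ae_restrict_mem measurableSet_Ioc] with t htm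
      exact (part1 t htm.1).congr (fun n => (Real.norm_eq_abs _).symm)
  -- Part 3 : the convolution identities
  · intro t ht
    have hx : ∀ n : ℕ, (|c| * t ^ α) ^ n = |c| ^ n * t ^ ((n : ℝ) * α) := by
      intro n
      rw [mul_pow, ← Real.rpow_natCast (t ^ α) n, ← Real.rpow_mul ht.le, mul_comm α (n : ℝ)]
    -- the common tail computation
    have tail : (∑' n : ℕ, -((-1:ℝ) ^ (n+1) * c ^ ((n+1) + 1) * t ^ ((((n:ℕ):ℝ) + 1 + 1) * α - 1) /
          Real.Gamma ((((n:ℕ):ℝ) + 1 + 1) * α)))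
        = c * t ^ (α - 1) / Real.Gamma α
          - (∑' n : ℕ, (-1) ^ n * c ^ (n + 1) * t ^ (((n : ℝ) + 1) * α - 1) /
              Real.Gamma (((n : ℝ) + 1) * α)) := by
      have hsum := part1' t ht
      have h0 := Summable.tsum_eq_zero_add hsum
      have hcongr : (∑' n : ℕ, -((-1:ℝ) ^ (n+1) * c ^ ((n+1) + 1) *
            t ^ ((((n:ℕ):ℝ) + 1 + 1) * α - 1) / Real.Gamma ((((n:ℕ):ℝ) + 1 + 1) * α)))
          = ∑' n : ℕ, -((-1:ℝ) ^ (n+1) * c ^ ((n+1) + 1) *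
            t ^ (((((n+1):ℕ):ℝ) + 1) * α - 1) / Real.Gamma (((((n+1):ℕ):ℝ) + 1) * α)) := by
        refine tsum_congr (fun n => ?_)
        push_cast
        ring_nf
      rw [hcongr, tsum_neg, h0]
      simp only [Nat.cast_zero, zero_add, one_mul, pow_zero, pow_one]
      ring
    constructor
    -- First convolution K * R
    · have step0 : (∫ s in (0:ℝ)..t, (c * (t - s) ^ (α - 1) / Real.Gamma α) *
          (∑' n : ℕ, (-1) ^ n * c ^ (n + 1) * s ^ (((n : ℝ) + 1) * α - 1) /
            Real.Gamma (((n : ℝ) + 1) * α)))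
          = ∫ s in (0:ℝ)..t, ∑' n : ℕ, (c * (t - s) ^ (α - 1) / Real.Gamma α) *
            ((-1) ^ n * c ^ (n + 1) * s ^ (((n : ℝ) + 1) * α - 1) /
              Real.Gamma (((n : ℝ) + 1) * α)) :=
        intervalIntegral.integral_congr (fun s _ => tsum_mul_left.symm)
      rw [step0, intervalIntegral.integral_of_le ht.le]
      have hFrw : ∀ (n : ℕ) (s : ℝ), (c * (t - s) ^ (α - 1) / Real.Gamma α) *
          ((-1) ^ n * c ^ (n + 1) * s ^ (((n:ℝ) + 1) * α - 1) / Real.Gamma (((n:ℝ) + 1) * α))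
          = ((-1) ^ n * c ^ (n + 2) / (Real.Gamma α * Real.Gamma (((n:ℝ) + 1) * α))) *
            (s ^ ((((n:ℝ) + 1) * α) - 1) * (t - s) ^ (α - 1)) :=
        fun n s => by ring
      have hFint : ∀ n : ℕ, Integrable (fun s : ℝ => (c * (t - s) ^ (α - 1) / Real.Gamma α) *
          ((-1) ^ n * c ^ (n + 1) * s ^ (((n:ℝ) + 1) * α - 1) / Real.Gamma (((n:ℝ) + 1) * α)))
          (volume.restrict (Ioc 0 t)) := by
        intro n
        exact ((conv_piece ht (hγ n) hα0 _).1).congr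
          (Eventually.of_forall (fun s => (hFrw n s).symm))
      have hFnorm : ∀ n : ℕ, (∫ s in Ioc (0:ℝ) t,
          ‖(c * (t - s) ^ (α - 1) / Real.Gamma α) *
            ((-1) ^ n * c ^ (n + 1) * s ^ (((n:ℝ) + 1) * α - 1) /
              Real.Gamma (((n:ℝ) + 1) * α))‖)
          = (|c| * t ^ (α - 1) * (|c| * t ^ α)) * (|c| * t ^ α) ^ n /
            Real.Gamma ((n : ℝ) * α + (α + α)) := by
        intro n
        have e1 : (∫ s in Ioc (0:ℝ) t,
            ‖(c * (t - s) ^ (α - 1) / Real.Gamma α) *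
              ((-1) ^ n * c ^ (n + 1) * s ^ (((n:ℝ) + 1) * α - 1) /
                Real.Gamma (((n:ℝ) + 1) * α))‖)
            = ∫ s in Ioc (0:ℝ) t,
              ‖((-1) ^ n * c ^ (n + 2) / (Real.Gamma α * Real.Gamma (((n:ℝ) + 1) * α))) *
                (s ^ ((((n:ℝ) + 1) * α) - 1) * (t - s) ^ (α - 1))‖ := by
          refine integral_congr_ae (Eventually.of_forall (fun s => ?_))
          simp only [hFrw]
        rw [e1, (conv_piece ht (hγ n) hα0 _).2.2]
        -- algebra
        have habs2 : |(-1:ℝ) ^ n * c ^ (n + 2) / (Real.Gamma α * Real.Gamma (((n:ℝ) + 1) * α))|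
            = |c| ^ (n+2) / (Real.Gamma α * Real.Gamma (((n:ℝ) + 1) * α)) := by
          rw [abs_div, abs_mul, abs_pow, abs_neg, abs_one, one_pow, one_mul, abs_pow,
            abs_of_pos (mul_pos hΓα (hΓγ n))]
        rw [habs2, hx n,
          show (((n:ℝ) + 1) * α) + α - 1 = (n:ℝ) * α + (α + (α - 1)) by ring,
          Real.rpow_add ht, Real.rpow_add ht,
          show (((n:ℝ) + 1) * α) + α = (n:ℝ) * α + (α + α) by ring]
        have hΓD : (0:ℝ) < Real.Gamma ((n:ℝ) * α + (α + α)) :=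
          Real.Gamma_pos_of_pos (by positivity)
        field_simp
        ring
      have hFsum : Summable (fun n : ℕ => ∫ s in Ioc (0:ℝ) t,
          ‖(c * (t - s) ^ (α - 1) / Real.Gamma α) *
            ((-1) ^ n * c ^ (n + 1) * s ^ (((n:ℝ) + 1) * α - 1) /
              Real.Gamma (((n:ℝ) + 1) * α))‖) := by
        refine (ml_summable (C := |c| * t ^ (α - 1) * (|c| * t ^ α)) (x := |c| * t ^ α)
          ⟨hα0, hα1⟩ (by linarith) (by positivity)).congr (fun n => (hFnorm n).symm)
      have hswap := integral_tsum_of_summable_integral_norm hFint hFsum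
      rw [← hswap]
      have hval : ∀ n : ℕ, (∫ s in Ioc (0:ℝ) t,
          (c * (t - s) ^ (α - 1) / Real.Gamma α) *
            ((-1) ^ n * c ^ (n + 1) * s ^ (((n:ℝ) + 1) * α - 1) /
              Real.Gamma (((n:ℝ) + 1) * α)))
          = -((-1:ℝ) ^ (n+1) * c ^ ((n+1) + 1) * t ^ ((((n:ℕ):ℝ) + 1 + 1) * α - 1) /
              Real.Gamma ((((n:ℕ):ℝ) + 1 + 1) * α)) := by
        intro n
        have e1 : (∫ s in Ioc (0:ℝ) t,
            (c * (t - s) ^ (α - 1) / Real.Gamma α) *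
              ((-1) ^ n * c ^ (n + 1) * s ^ (((n:ℝ) + 1) * α - 1) /
                Real.Gamma (((n:ℝ) + 1) * α)))
            = ∫ s in Ioc (0:ℝ) t,
              ((-1) ^ n * c ^ (n + 2) / (Real.Gamma α * Real.Gamma (((n:ℝ) + 1) * α))) *
                (s ^ ((((n:ℝ) + 1) * α) - 1) * (t - s) ^ (α - 1)) := by
          refine integral_congr_ae (Eventually.of_forall (fun s => ?_))
          simp only [hFrw]
        rw [e1, (conv_piece ht (hγ n) hα0 _).2.1]
        have hΓD : (0:ℝ) < Real.Gamma ((((n:ℕ):ℝ) + 1 + 1) * α) :=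
          Real.Gamma_pos_of_pos (by positivity)
        rw [show (((n:ℝ) + 1) * α) + α = (((n:ℕ):ℝ) + 1 + 1) * α by push_cast; ring]
        field_simp
        ring
      rw [tsum_congr hval, tail]
    -- Second convolution R * K
    · have step0 : (∫ s in (0:ℝ)..t,
          (∑' n : ℕ, (-1) ^ n * c ^ (n + 1) * (t - s) ^ (((n : ℝ) + 1) * α - 1) /
            Real.Gamma (((n : ℝ) + 1) * α)) * (c * s ^ (α - 1) / Real.Gamma α))
          = ∫ s in (0:ℝ)..t, ∑' n : ℕ,
            ((-1) ^ n * c ^ (n + 1) * (t - s) ^ (((n : ℝ) + 1) * α - 1) /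
              Real.Gamma (((n : ℝ) + 1) * α)) * (c * s ^ (α - 1) / Real.Gamma α) :=
        intervalIntegral.integral_congr (fun s _ => tsum_mul_right.symm)
      rw [step0, intervalIntegral.integral_of_le ht.le]
      have hFrw : ∀ (n : ℕ) (s : ℝ),
          ((-1) ^ n * c ^ (n + 1) * (t - s) ^ (((n:ℝ) + 1) * α - 1) /
            Real.Gamma (((n:ℝ) + 1) * α)) * (c * s ^ (α - 1) / Real.Gamma α)
          = ((-1) ^ n * c ^ (n + 2) / (Real.Gamma α * Real.Gamma (((n:ℝ) + 1) * α))) *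
            (s ^ (α - 1) * (t - s) ^ ((((n:ℝ) + 1) * α) - 1)) :=
        fun n s => by ring
      have hFint : ∀ n : ℕ, Integrable (fun s : ℝ =>
          ((-1) ^ n * c ^ (n + 1) * (t - s) ^ (((n:ℝ) + 1) * α - 1) /
            Real.Gamma (((n:ℝ) + 1) * α)) * (c * s ^ (α - 1) / Real.Gamma α))
          (volume.restrict (Ioc 0 t)) := by
        intro n
        exact ((conv_piece ht hα0 (hγ n) _).1).congr
          (Eventually.of_forall (fun s => (hFrw n s).symm))
      have hFnorm : ∀ n : ℕ, (∫ s in Ioc (0:ℝ) t,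
          ‖((-1) ^ n * c ^ (n + 1) * (t - s) ^ (((n:ℝ) + 1) * α - 1) /
            Real.Gamma (((n:ℝ) + 1) * α)) * (c * s ^ (α - 1) / Real.Gamma α)‖)
          = (|c| * t ^ (α - 1) * (|c| * t ^ α)) * (|c| * t ^ α) ^ n /
            Real.Gamma ((n : ℝ) * α + (α + α)) := by
        intro n
        have e1 : (∫ s in Ioc (0:ℝ) t,
            ‖((-1) ^ n * c ^ (n + 1) * (t - s) ^ (((n:ℝ) + 1) * α - 1) /
              Real.Gamma (((n:ℝ) + 1) * α)) * (c * s ^ (α - 1) / Real.Gamma α)‖)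
            = ∫ s in Ioc (0:ℝ) t,
              ‖((-1) ^ n * c ^ (n + 2) / (Real.Gamma α * Real.Gamma (((n:ℝ) + 1) * α))) *
                (s ^ (α - 1) * (t - s) ^ ((((n:ℝ) + 1) * α) - 1))‖ := by
          refine integral_congr_ae (Eventually.of_forall (fun s => ?_))
          simp only [hFrw]
        rw [e1, (conv_piece ht hα0 (hγ n) _).2.2]
        have habs2 : |(-1:ℝ) ^ n * c ^ (n + 2) / (Real.Gamma α * Real.Gamma (((n:ℝ) + 1) * α))|
            = |c| ^ (n+2) / (Real.Gamma α * Real.Gamma (((n:ℝ) + 1) * α)) := by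
          rw [abs_div, abs_mul, abs_pow, abs_neg, abs_one, one_pow, one_mul, abs_pow,
            abs_of_pos (mul_pos hΓα (hΓγ n))]
        rw [habs2, hx n,
          show α + (((n:ℝ) + 1) * α) - 1 = (n:ℝ) * α + (α + (α - 1)) by ring,
          Real.rpow_add ht, Real.rpow_add ht,
          show α + (((n:ℝ) + 1) * α) = (n:ℝ) * α + (α + α) by ring]
        have hΓD : (0:ℝ) < Real.Gamma ((n:ℝ) * α + (α + α)) :=
          Real.Gamma_pos_of_pos (by positivity)
        field_simp
        ring
      have hFsum : Summable (fun n : ℕ => ∫ s in Ioc (0:ℝ) t,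
          ‖((-1) ^ n * c ^ (n + 1) * (t - s) ^ (((n:ℝ) + 1) * α - 1) /
            Real.Gamma (((n:ℝ) + 1) * α)) * (c * s ^ (α - 1) / Real.Gamma α)‖) := by
        refine (ml_summable (C := |c| * t ^ (α - 1) * (|c| * t ^ α)) (x := |c| * t ^ α)
          ⟨hα0, hα1⟩ (by linarith) (by positivity)).congr (fun n => (hFnorm n).symm)
      have hswap := integral_tsum_of_summable_integral_norm hFint hFsum
      rw [← hswap]
      have hval : ∀ n : ℕ, (∫ s in Ioc (0:ℝ) t,
          ((-1) ^ n * c ^ (n + 1) * (t - s) ^ (((n:ℝ) + 1) * α - 1) /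
            Real.Gamma (((n:ℝ) + 1) * α)) * (c * s ^ (α - 1) / Real.Gamma α))
          = -((-1:ℝ) ^ (n+1) * c ^ ((n+1) + 1) * t ^ ((((n:ℕ):ℝ) + 1 + 1) * α - 1) /
              Real.Gamma ((((n:ℕ):ℝ) + 1 + 1) * α)) := by
        intro n
        have e1 : (∫ s in Ioc (0:ℝ) t,
            ((-1) ^ n * c ^ (n + 1) * (t - s) ^ (((n:ℝ) + 1) * α - 1) /
              Real.Gamma (((n:ℝ) + 1) * α)) * (c * s ^ (α - 1) / Real.Gamma α))
            = ∫ s in Ioc (0:ℝ) t,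
              ((-1) ^ n * c ^ (n + 2) / (Real.Gamma α * Real.Gamma (((n:ℝ) + 1) * α))) *
                (s ^ (α - 1) * (t - s) ^ ((((n:ℝ) + 1) * α) - 1)) := by
          refine integral_congr_ae (Eventually.of_forall (fun s => ?_))
          simp only [hFrw]
        rw [e1, (conv_piece ht hα0 (hγ n) _).2.1]
        have hΓD : (0:ℝ) < Real.Gamma ((((n:ℕ):ℝ) + 1 + 1) * α) :=
          Real.Gamma_pos_of_pos (by positivity)
        rw [show α + (((n:ℝ) + 1) * α) = (((n:ℕ):ℝ) + 1 + 1) * α by push_cast; ring]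
        field_simp
        ring
      rw [tsum_congr hval, tail]
end

section
/- Let K be a scalar kernel in L¹_loc(ℝ₊, ℝ) that satisfies condition (★), with resolvent of the first kind L. Then for every h ≥ 0 the function t ↦ (Δ_hK*L)(t) = ∫_{[0,t]} K(t+h−s) L(ds) is non-decreasing on ℝ₊ and takes values in [0,1]. -/
open MeasureTheory Set
open scoped ENNReal

lemma icc_trans_mono (L : Measure ℝ)
    (hLmono : ∀ t ≥ (0:ℝ), ∀ s₁ s₂ : ℝ, 0 ≤ s₁ → s₁ ≤ s₂ →
      L (Set.Icc s₂ (s₂ + t)) ≤ L (Set.Icc s₁ (s₁ + t)))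
    {t₁ t₂ : ℝ} (ht₁ : 0 ≤ t₁) (ht : t₁ ≤ t₂) :
    ∀ x y : ℝ, 0 ≤ x → L (Icc (t₂ + x) (t₂ + y)) ≤ L (Icc (t₁ + x) (t₁ + y)) := by
  intro x y hx
  rcases le_or_gt x y with hxy | hxy
  · have h1 : t₁ + y = (t₁ + x) + (y - x) := by ring
    have h2 : t₂ + y = (t₂ + x) + (y - x) := by ring
    rw [h1, h2]
    exact hLmono (y - x) (by linarith) (t₁ + x) (t₂ + x) (by linarith) (by linarith)
  · rw [Icc_eq_empty (by intro hc; linarith : ¬ t₂ + x ≤ t₂ + y),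
        Icc_eq_empty (by intro hc; linarith : ¬ t₁ + x ≤ t₁ + y)]

lemma ioc_trans_mono (L : Measure ℝ)
    (hLmono : ∀ t ≥ (0:ℝ), ∀ s₁ s₂ : ℝ, 0 ≤ s₁ → s₁ ≤ s₂ →
      L (Set.Icc s₂ (s₂ + t)) ≤ L (Set.Icc s₁ (s₁ + t)))
    {t₁ t₂ : ℝ} (ht₁ : 0 ≤ t₁) (ht : t₁ ≤ t₂) :
    ∀ x y : ℝ, 0 ≤ x → L (Ioc (t₂ + x) (t₂ + y)) ≤ L (Ioc (t₁ + x) (t₁ + y)) := by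
  intro x y hx
  rcases le_or_gt y x with hxy | hxy
  · rw [Ioc_eq_empty (by intro hc; linarith : ¬ t₂ + x < t₂ + y),
        Ioc_eq_empty (by intro hc; linarith : ¬ t₁ + x < t₁ + y)]
  · have hδpos : ∀ n : ℕ, 0 < (y - x) / (n + 1) := fun n => div_pos (by linarith) (by positivity)
    have hδanti : ∀ m n : ℕ, m ≤ n → (y - x) / (n + 1) ≤ (y - x) / (m + 1) := by
      intro m n hmn
      have hc : (m:ℝ) + 1 ≤ (n:ℝ) + 1 := by exact_mod_cast Nat.succ_le_succ hmn
      gcongr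
    have key : ∀ t : ℝ, Ioc (t + x) (t + y) = ⋃ n : ℕ, Icc (t + (x + (y - x) / (n + 1))) (t + y) := by
      intro t
      ext z
      simp only [mem_Ioc, mem_iUnion, mem_Icc]
      constructor
      · rintro ⟨h1, h2⟩
        obtain ⟨n, hn⟩ := exists_nat_gt ((y - x) / (z - (t + x)))
        refine ⟨n, ?_, h2⟩
        have hz : 0 < z - (t + x) := by linarith
        have h3 : (y - x) / (z - (t + x)) ≤ (n : ℝ) + 1 := by linarith
        have h4 : y - x ≤ ((n : ℝ) + 1) * (z - (t + x)) := (div_le_iff₀ hz).mp h3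
        have h5 : (y - x) / ((n : ℝ) + 1) ≤ z - (t + x) := by
          rw [div_le_iff₀ (by positivity)]
          nlinarith
        linarith
      · rintro ⟨n, h1, h2⟩
        exact ⟨by have := hδpos n; linarith, h2⟩
    have hmono : ∀ t : ℝ, Monotone (fun n : ℕ => Icc (t + (x + (y - x) / (n + 1))) (t + y)) := by
      intro t m n hmn
      apply Icc_subset_Icc_left
      have := hδanti m n hmn
      linarith
    rw [key t₁, key t₂, (hmono t₁).measure_iUnion, (hmono t₂).measure_iUnion]
    exact iSup_mono fun n =>
      icc_trans_mono L hLmono ht₁ ht (x + (y - x) / (n + 1)) y (by have := hδpos n; linarith)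

lemma ioo_trans_mono (L : Measure ℝ)
    (hLmono : ∀ t ≥ (0:ℝ), ∀ s₁ s₂ : ℝ, 0 ≤ s₁ → s₁ ≤ s₂ →
      L (Set.Icc s₂ (s₂ + t)) ≤ L (Set.Icc s₁ (s₁ + t)))
    {t₁ t₂ : ℝ} (ht₁ : 0 ≤ t₁) (ht : t₁ ≤ t₂) :
    ∀ x y : ℝ, 0 ≤ x → L (Ioo (t₂ + x) (t₂ + y)) ≤ L (Ioo (t₁ + x) (t₁ + y)) := by
  intro x y hx
  rcases le_or_gt y x with hxy | hxy
  · rw [Ioo_eq_empty (by intro hc; linarith : ¬ t₂ + x < t₂ + y),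
        Ioo_eq_empty (by intro hc; linarith : ¬ t₁ + x < t₁ + y)]
  · have hδpos : ∀ n : ℕ, 0 < (y - x) / (n + 1) := fun n => div_pos (by linarith) (by positivity)
    have hδanti : ∀ m n : ℕ, m ≤ n → (y - x) / (n + 1) ≤ (y - x) / (m + 1) := by
      intro m n hmn
      have hc : (m:ℝ) + 1 ≤ (n:ℝ) + 1 := by exact_mod_cast Nat.succ_le_succ hmn
      gcongr
    have key : ∀ t : ℝ, Ioo (t + x) (t + y) = ⋃ n : ℕ, Ioc (t + x) (t + (y - (y - x) / (n + 1))) := by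
      intro t
      ext z
      simp only [mem_Ioo, mem_iUnion, mem_Ioc]
      constructor
      · rintro ⟨h1, h2⟩
        obtain ⟨n, hn⟩ := exists_nat_gt ((y - x) / ((t + y) - z))
        refine ⟨n, h1, ?_⟩
        have hz : 0 < (t + y) - z := by linarith
        have h3 : (y - x) / ((t + y) - z) ≤ (n : ℝ) + 1 := by linarith
        have h4 : y - x ≤ ((n : ℝ) + 1) * ((t + y) - z) := (div_le_iff₀ hz).mp h3
        have h5 : (y - x) / ((n : ℝ) + 1) ≤ (t + y) - z := by
          rw [div_le_iff₀ (by positivity)]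
          nlinarith
        linarith
      · rintro ⟨n, h1, h2⟩
        exact ⟨h1, by have := hδpos n; linarith⟩
    have hmono : ∀ t : ℝ, Monotone (fun n : ℕ => Ioc (t + x) (t + (y - (y - x) / (n + 1)))) := by
      intro t m n hmn
      apply Ioc_subset_Ioc_right
      have := hδanti m n hmn
      linarith
    rw [key t₁, key t₂, (hmono t₁).measure_iUnion, (hmono t₂).measure_iUnion]
    exact iSup_mono fun n =>
      ioc_trans_mono L hLmono ht₁ ht x (y - (y - x) / (n + 1)) hx

lemma U_classify (K : ℝ → ℝ) (hKmono : AntitoneOn K (Set.Ioi 0))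
    (hKcont : ContinuousOn K (Set.Ioi 0)) (h : ℝ) (hh : 0 ≤ h) (c : ℝ) :
    ∃ a : ℝ, 0 ≤ a ∧ a ≤ h ∧
      ({u : ℝ | u ∈ Set.Ioc 0 h ∧ c < K (h - u)} = Set.Ioo a h ∨
       {u : ℝ | u ∈ Set.Ioc 0 h ∧ c < K (h - u)} = Set.Ioo a h ∪ {h}) := by
  set S : Set ℝ := {u : ℝ | u ∈ Ioo 0 h ∧ c < K (h - u)} with hSdef
  have hSsub : ∀ u ∈ S, u ∈ Ioo 0 h := fun u hu => hu.1
  have hbdd : BddBelow (S ∪ {h}) := by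
    refine ⟨0, ?_⟩
    rintro z (hz | hz)
    · exact le_of_lt (hSsub z hz).1
    · rw [mem_singleton_iff] at hz; subst hz; exact hh
  have hne : (S ∪ {h}).Nonempty := ⟨h, Or.inr rfl⟩
  set a := sInf (S ∪ {h}) with ha
  have ha0 : 0 ≤ a := by
    apply le_csInf hne
    rintro z (hz | hz)
    · exact le_of_lt (hSsub z hz).1
    · rw [mem_singleton_iff] at hz; subst hz; exact hh
  have hah : a ≤ h := csInf_le hbdd (Or.inr rfl)
  have hopen : ∀ v ∈ S, ∃ u ∈ S, u < v := by
    rintro v ⟨⟨hv0, hvh⟩, hvK⟩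
    have hhv : 0 < h - v := by linarith
    have hcA : ContinuousAt K (h - v) := hKcont.continuousAt (Ioi_mem_nhds hhv)
    have hnb : {x : ℝ | c < K x} ∈ nhds (h - v) := hcA.preimage_mem_nhds (Ioi_mem_nhds hvK)
    obtain ⟨ε, hε, hball⟩ := Metric.mem_nhds_iff.mp hnb
    set x := h - v + min (ε / 2) (v / 2) with hxdef
    have hmin : 0 < min (ε / 2) (v / 2) := lt_min (by linarith) (by linarith)
    have hminε : min (ε / 2) (v / 2) ≤ ε / 2 := min_le_left _ _
    have hminv : min (ε / 2) (v / 2) ≤ v / 2 := min_le_right _ _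
    have hx1 : x ∈ Metric.ball (h - v) ε := by
      rw [Metric.mem_ball, Real.dist_eq]
      rw [show x - (h - v) = min (ε / 2) (v / 2) by rw [hxdef]; ring]
      rw [abs_of_pos hmin]
      linarith
    have hxK : c < K x := hball hx1
    refine ⟨h - x, ⟨⟨?_, ?_⟩, ?_⟩, ?_⟩
    · rw [hxdef]; linarith
    · rw [hxdef]; linarith
    · rw [show h - (h - x) = x by ring]; exact hxK
    · rw [hxdef]; linarith
  have hS : S = Ioo a h := by
    ext v
    constructor
    · intro hv
      obtain ⟨u, huS, hlt⟩ := hopen v hv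
      exact ⟨lt_of_le_of_lt (csInf_le hbdd (Or.inl huS)) hlt, hv.1.2⟩
    · rintro ⟨hav, hvh⟩
      obtain ⟨w, hw, hwv⟩ := exists_lt_of_csInf_lt hne hav
      have hwS : w ∈ S := by
        rcases hw with hw | hw
        · exact hw
        · rw [mem_singleton_iff] at hw; subst hw; exact absurd hvh (by linarith)
      refine ⟨⟨by linarith [(hSsub w hwS).1], hvh⟩, ?_⟩
      have hK := hKmono (show h - v ∈ Ioi 0 from by simp only [mem_Ioi]; linarith)
        (show h - w ∈ Ioi 0 from by simp only [mem_Ioi]; linarith [(hSsub w hwS).2])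
        (by linarith : h - v ≤ h - w)
      exact lt_of_lt_of_le hwS.2 hK
  by_cases hcase : 0 < h ∧ c < K (h - h)
  · refine ⟨a, ha0, hah, Or.inr ?_⟩
    ext u
    simp only [mem_setOf_eq, mem_Ioc, mem_union, mem_singleton_iff]
    constructor
    · rintro ⟨⟨hu0, huh⟩, hK⟩
      rcases lt_or_eq_of_le huh with hlt | heq
      · left
        have : u ∈ S := ⟨⟨hu0, hlt⟩, hK⟩
        rw [hS] at this; exact this
      · right; exact heq
    · rintro (hu | rfl)
      · have : u ∈ S := by rw [hS]; exact hu
        exact ⟨⟨this.1.1, le_of_lt this.1.2⟩, this.2⟩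
      · exact ⟨⟨hcase.1, le_rfl⟩, hcase.2⟩
  · refine ⟨a, ha0, hah, Or.inl ?_⟩
    ext u
    simp only [mem_setOf_eq, mem_Ioc]
    constructor
    · rintro ⟨⟨hu0, huh⟩, hK⟩
      rcases lt_or_eq_of_le huh with hlt | heq
      · have : u ∈ S := ⟨⟨hu0, hlt⟩, hK⟩
        rw [hS] at this; exact this
      · exact absurd ⟨heq ▸ hu0, heq ▸ hK⟩ hcase
    · intro hu
      have : u ∈ S := by rw [hS]; exact hu
      exact ⟨⟨this.1.1, le_of_lt this.1.2⟩, this.2⟩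

/-- If the scalar kernel `K` satisfies condition (★) with resolvent of the first kind `L`,
then for every `h ≥ 0` the function `t ↦ (Δ_h K * L)(t) = ∫_{[0,t]} K(t+h-s) L(ds)` is
non-decreasing on `ℝ₊` and takes values in `[0,1]`. -/
theorem shifted_kernel_conv_resolvent (K : ℝ → ℝ)
    (hKloc : ∀ T : ℝ, 0 < T → IntegrableOn K (Set.Ioc 0 T))
    (hKpos : ∀ t > (0:ℝ), 0 ≤ K t) (hKnz : ∃ t > (0:ℝ), K t ≠ 0)
    (hKmono : AntitoneOn K (Set.Ioi 0)) (hKcont : ContinuousOn K (Set.Ioi 0))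
    (L : Measure ℝ) (hLfin : ∀ T > (0:ℝ), L (Set.Icc 0 T) < ⊤)
    (hres : ∀ t ≥ (0:ℝ), (∫ s in Set.Icc 0 t, K (t - s) ∂L) = 1)
    (hLmono : ∀ t ≥ (0:ℝ), ∀ s₁ s₂ : ℝ, 0 ≤ s₁ → s₁ ≤ s₂ →
      L (Set.Icc s₂ (s₂ + t)) ≤ L (Set.Icc s₁ (s₁ + t)))
    (h : ℝ) (hh : 0 ≤ h) :
    (∀ t₁ t₂ : ℝ, 0 ≤ t₁ → t₁ ≤ t₂ →
      (∫ s in Set.Icc 0 t₁, K (t₁ + h - s) ∂L) ≤ ∫ s in Set.Icc 0 t₂, K (t₂ + h - s) ∂L) ∧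
    (∀ t : ℝ, 0 ≤ t → (∫ s in Set.Icc 0 t, K (t + h - s) ∂L) ∈ Set.Icc (0:ℝ) 1) := by
  -- `K 0 > 0`
  have hres0 := hres 0 le_rfl
  rw [Set.Icc_self, Measure.restrict_singleton, integral_smul_measure, integral_dirac] at hres0
  have hK0 : 0 < K 0 := by
    by_contra hcon
    push_neg at hcon
    have h1 : (L {0}).toReal • K (0 - (0:ℝ)) ≤ 0 := by
      rw [smul_eq_mul]
      exact mul_nonpos_of_nonneg_of_nonpos ENNReal.toReal_nonneg (by rwa [sub_zero])
    rw [hres0] at h1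
    linarith
  have hKge : ∀ x : ℝ, 0 ≤ x → 0 ≤ K x := by
    intro x hx
    rcases eq_or_lt_of_le hx with heq | hlt
    · rw [← heq]; exact le_of_lt hK0
    · exact hKpos x hlt
  -- integrability on `[0, t+h]`
  have hInt : ∀ t : ℝ, 0 ≤ t → IntegrableOn (fun s => K (t + h - s)) (Set.Icc 0 (t + h)) L := by
    intro t ht
    by_contra hni
    have h0 := integral_undef hni
    rw [hres (t + h) (by linarith)] at h0
    norm_num at h0
  have hsub : ∀ t : ℝ, 0 ≤ t → Set.Ioc t (t + h) ⊆ Set.Icc 0 (t + h) := by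
    intro t ht s hs
    exact ⟨by linarith [hs.1], hs.2⟩
  have hIntR : ∀ t : ℝ, 0 ≤ t → IntegrableOn (fun s => K (t + h - s)) (Set.Ioc t (t + h)) L :=
    fun t ht => (hInt t ht).mono_set (hsub t ht)
  have hsplit : ∀ t : ℝ, 0 ≤ t →
      (∫ s in Set.Icc 0 t, K (t + h - s) ∂L) + (∫ s in Set.Ioc t (t + h), K (t + h - s) ∂L) = 1 := by
    intro t ht
    have hdisj : Disjoint (Set.Icc 0 t) (Set.Ioc t (t + h)) := by
      rw [Set.disjoint_left]
      rintro s ⟨_, h1⟩ ⟨h2, _⟩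
      linarith
    rw [← setIntegral_union hdisj measurableSet_Ioc
      ((hInt t ht).mono_set (Set.Icc_subset_Icc_right (by linarith))) (hIntR t ht)]
    rw [Set.Icc_union_Ioc_eq_Icc ht (by linarith)]
    exact hres (t + h) (by linarith)
  have hA0 : ∀ t : ℝ, 0 ≤ t → 0 ≤ ∫ s in Set.Icc 0 t, K (t + h - s) ∂L := by
    intro t ht
    apply setIntegral_nonneg measurableSet_Icc
    intro s hs
    exact hKge _ (by linarith [hs.1, hs.2])
  have hR0 : ∀ t : ℝ, 0 ≤ t → 0 ≤ ∫ s in Set.Ioc t (t + h), K (t + h - s) ∂L := by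
    intro t ht
    apply setIntegral_nonneg measurableSet_Ioc
    intro s hs
    exact hKge _ (by linarith [hs.2])
  refine ⟨?_, fun t ht => ⟨hA0 t ht, by linarith [hsplit t ht, hR0 t ht]⟩⟩
  intro t₁ t₂ ht₁ ht
  have ht₂ : 0 ≤ t₂ := le_trans ht₁ ht
  suffices hRmono : (∫ s in Set.Ioc t₂ (t₂ + h), K (t₂ + h - s) ∂L) ≤
      ∫ s in Set.Ioc t₁ (t₁ + h), K (t₁ + h - s) ∂L by
    linarith [hsplit t₁ ht₁, hsplit t₂ ht₂]
  have hnnR : ∀ t : ℝ, 0 ≤ t →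
      0 ≤ᵐ[L.restrict (Set.Ioc t (t + h))] fun s => K (t + h - s) := by
    intro t ht
    apply ae_restrict_of_forall_mem measurableSet_Ioc
    intro s hs
    exact hKge _ (by linarith [hs.2])
  have heq : ∀ t : ℝ, 0 ≤ t → (∫ s in Set.Ioc t (t + h), K (t + h - s) ∂L)
      = (∫⁻ s in Set.Ioc t (t + h), ENNReal.ofReal (K (t + h - s)) ∂L).toReal := fun t ht =>
    integral_eq_lintegral_of_nonneg_ae (hnnR t ht) (hIntR t ht).1
  rw [heq t₁ ht₁, heq t₂ ht₂]
  have hfin : (∫⁻ s in Set.Ioc t₁ (t₁ + h), ENNReal.ofReal (K (t₁ + h - s)) ∂L) ≠ ⊤ :=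
    (hIntR t₁ ht₁).lintegral_lt_top.ne
  apply ENNReal.toReal_mono hfin
  rw [lintegral_eq_lintegral_meas_lt _ (hnnR t₁ ht₁) (hIntR t₁ ht₁).1.aemeasurable,
      lintegral_eq_lintegral_meas_lt _ (hnnR t₂ ht₂) (hIntR t₂ ht₂).1.aemeasurable]
  apply lintegral_mono_ae
  filter_upwards [ae_restrict_mem measurableSet_Ioi] with c _hc
  obtain ⟨a, ha0, hah, hU⟩ := U_classify K hKmono hKcont h hh c
  have hTeq : ∀ t : ℝ, {s : ℝ | c < K (t + h - s)} ∩ Set.Ioc t (t + h)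
      = (fun s => s - t) ⁻¹' {u : ℝ | u ∈ Set.Ioc 0 h ∧ c < K (h - u)} := by
    intro t
    ext s
    simp only [mem_inter_iff, mem_setOf_eq, mem_preimage, mem_Ioc]
    constructor
    · rintro ⟨h1, h2, h3⟩
      exact ⟨⟨by linarith, by linarith⟩, by rw [show h - (s - t) = t + h - s by ring]; exact h1⟩
    · rintro ⟨⟨h1, h2⟩, h3⟩
      exact ⟨by rw [show t + h - s = h - (s - t) by ring]; exact h3, by linarith, by linarith⟩
  rw [Measure.restrict_apply' measurableSet_Ioc, Measure.restrict_apply' measurableSet_Ioc,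
    hTeq t₁, hTeq t₂]
  rcases hU with hU | hU
  · rw [hU, Set.preimage_sub_const_Ioo, Set.preimage_sub_const_Ioo,
      add_comm a t₂, add_comm h t₂, add_comm a t₁, add_comm h t₁]
    exact ioo_trans_mono L hLmono ht₁ ht a h ha0
  · have hsing : ∀ t : ℝ, (fun s : ℝ => s - t) ⁻¹' ({h} : Set ℝ) = {h + t} := by
      intro t
      ext s
      simp [sub_eq_iff_eq_add]
    rw [hU]
    simp only [Set.preimage_union]
    rw [Set.preimage_sub_const_Ioo, Set.preimage_sub_const_Ioo, hsing t₁, hsing t₂]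
    have hdisj : ∀ t : ℝ, Disjoint (Ioo (a + t) (h + t)) ({h + t} : Set ℝ) := by
      intro t
      rw [Set.disjoint_singleton_right]
      intro hc2
      exact absurd hc2.2 (lt_irrefl _)
    rw [measure_union (hdisj t₁) (measurableSet_singleton _),
        measure_union (hdisj t₂) (measurableSet_singleton _)]
    have h1 : L (Ioo (a + t₂) (h + t₂)) ≤ L (Ioo (a + t₁) (h + t₁)) := by
      rw [add_comm a t₂, add_comm h t₂, add_comm a t₁, add_comm h t₁]
      exact ioo_trans_mono L hLmono ht₁ ht a h ha0
    have h2 : L ({h + t₂} : Set ℝ) ≤ L ({h + t₁} : Set ℝ) := by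
      rw [show ({h + t₂} : Set ℝ) = Icc (t₂ + h) (t₂ + h) by rw [Set.Icc_self, add_comm],
          show ({h + t₁} : Set ℝ) = Icc (t₁ + h) (t₁ + h) by rw [Set.Icc_self, add_comm]]
      exact icc_trans_mono L hLmono ht₁ ht h h hh
    exact add_le_add h1 h2
end
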